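/- Let p ∈ (0,1), q < 0, and p' = p/(p-1). Let X be a metric space with a σ-finite Borel measure μ, fix a ∈ X, and let u, v : X → (0,∞) be measurable and locally integrable. If there is a constant C > 0 such that (∫_X (∫_{B(a,d(x,a))} f dμ)^q u(x) dμ(x))^{1/q} ≥ C (∫_X f(x)^p v(x) dμ(x))^{1/p} for every measurable f : X → [0,∞], then for every x ≠ a one has (∫_{X∖B(a,d(x,a))} u dμ)^{1/q} · (∫_{B(a,d(x,a))} v^{1-p'} dμ)^{1/p'} ≥ C; in particular D₁ := inf_{x ≠ a} of this quantity satisfies D₁ ≥ C > 0. -/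

import Mathlib

open MeasureTheory ENNReal Set Filter Topology

private lemma ennreal_rpow_anti {x y : ℝ≥0∞} {c : ℝ} (hc : c ≤ 0) (h : x ≤ y) :
    y ^ c ≤ x ^ c := by
  have h2 := ENNReal.inv_le_inv.mpr (ENNReal.rpow_le_rpow h (neg_nonneg.mpr hc))
  rwa [← ENNReal.rpow_neg, ← ENNReal.rpow_neg, neg_neg] at h2

/-- Necessity of the condition `D₁ > 0` for the reverse integral Hardy inequality
on a metric measure space: any admissible constant `C` is a lower bound for the
quantity defining `D₁`, so `D₁ ≥ C > 0`. -/
theorem reverse_integral_hardy_necessity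
    {X : Type*} [MetricSpace X] [MeasurableSpace X] [BorelSpace X]
    (μ : Measure X) [SigmaFinite μ] (a : X)
    (p q p' : ℝ) (hp : p ∈ Set.Ioo (0:ℝ) 1) (hq : q < 0) (hp' : p' = p / (p - 1))
    (u v : X → ℝ≥0∞) (hu : Measurable u) (hv : Measurable v)
    (hu_pos : ∀ x, 0 < u x) (hu_lt : ∀ x, u x < ∞)
    (hv_pos : ∀ x, 0 < v x) (hv_lt : ∀ x, v x < ∞)
    (hu_loc : ∀ K : Set X, IsCompact K → ∫⁻ x in K, u x ∂μ < ∞)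
    (hv_loc : ∀ K : Set X, IsCompact K → ∫⁻ x in K, v x ∂μ < ∞)
    (C : ℝ≥0∞) (hC_pos : 0 < C)
    (hineq : ∀ f : X → ℝ≥0∞, Measurable f →
      (∫⁻ x, (∫⁻ y in Metric.ball a (dist x a), f y ∂μ) ^ q * u x ∂μ) ^ (1 / q) ≥
        C * (∫⁻ x, (f x) ^ p * v x ∂μ) ^ (1 / p)) :
    (∀ x : X, x ≠ a →
      (∫⁻ y in (Metric.ball a (dist x a))ᶜ, u y ∂μ) ^ (1 / q) *
        (∫⁻ y in Metric.ball a (dist x a), (v y) ^ (1 - p') ∂μ) ^ (1 / p') ≥ C) ∧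
    (⨅ (x : X) (_ : x ≠ a),
      (∫⁻ y in (Metric.ball a (dist x a))ᶜ, u y ∂μ) ^ (1 / q) *
        (∫⁻ y in Metric.ball a (dist x a), (v y) ^ (1 - p') ∂μ) ^ (1 / p')) ≥ C := by
  obtain ⟨hp0, hp1⟩ := hp
  have hpne : p ≠ 0 := ne_of_gt hp0
  have hqne : q ≠ 0 := ne_of_lt hq
  have h1q : 1 / q < 0 := div_neg_of_pos_of_neg one_pos hq
  have hp'neg : p' < 0 := by
    rw [hp']; exact div_neg_of_pos_of_neg hp0 (by linarith)
  have h1p' : 1 / p' < 0 := div_neg_of_pos_of_neg one_pos hp'neg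
  have hprod : p' * (p - 1) = p := by
    rw [hp']; exact div_mul_cancel₀ p (sub_ne_zero.mpr hp1.ne)
  have hexp : (1 - p') * p + 1 = 1 - p' := by linear_combination (-1 : ℝ) * hprod
  have hsum : 1 / p' + 1 / p = 1 := by
    rw [hp', one_div_div]; field_simp; ring
  have hvm : Measurable fun y => v y ^ (1 - p') := hv.pow_const _
  have hvp0 : ∀ y, v y ^ (1 - p') ≠ 0 := by
    intro y h
    rcases ENNReal.rpow_eq_zero_iff.mp h with ⟨h1, _⟩ | ⟨h1, _⟩
    · exact (hv_pos y).ne' h1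
    · exact (hv_lt y).ne h1
  have hvpt : ∀ y, v y ^ (1 - p') ≠ ∞ := by
    intro y h
    rcases ENNReal.rpow_eq_top_iff.mp h with ⟨h1, _⟩ | ⟨h1, _⟩
    · exact (hv_pos y).ne' h1
    · exact (hv_lt y).ne h1
  -- The key estimate: for any set `F` and any measurable `E` on which the
  -- integral of `v ^ (1-p')` is finite and positive, testing the hypothesis with
  -- `f = indicator E (v ^ (1-p'))` yields the bound below.
  have key : ∀ (F E : Set X), MeasurableSet E →
      (∫⁻ y in E, v y ^ (1 - p') ∂μ) ≠ 0 → (∫⁻ y in E, v y ^ (1 - p') ∂μ) ≠ ∞ →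
      C ≤ (∫⁻ y in F, u y ∂μ) ^ (1 / q) * (∫⁻ y in E, v y ^ (1 - p') ∂μ) ^ (1 / p') := by
    intro F E hE hJ0 hJtop
    set JE := ∫⁻ y in E, v y ^ (1 - p') ∂μ with hJE
    set UF := ∫⁻ y in F, u y ∂μ with hUF
    set f : X → ℝ≥0∞ := E.indicator (fun y => v y ^ (1 - p')) with hfdef
    have hfm : Measurable f := hvm.indicator hE
    have hint : (∫⁻ x, f x ^ p * v x ∂μ) = JE := by
      have hpt : ∀ x, f x ^ p * v x = E.indicator (fun y => v y ^ (1 - p')) x := by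
        intro x
        by_cases hx : x ∈ E
        · simp only [hfdef, Set.indicator_of_mem hx]
          rw [← ENNReal.rpow_mul]
          nth_rewrite 2 [← ENNReal.rpow_one (v x)]
          rw [← ENNReal.rpow_add _ _ (hv_pos x).ne' (hv_lt x).ne, hexp]
        · simp [hfdef, Set.indicator_of_notMem hx, ENNReal.zero_rpow_of_pos hp0]
      rw [lintegral_congr hpt, lintegral_indicator hE, hJE]
    have hball : ∀ x, (∫⁻ y in Metric.ball a (dist x a), f y ∂μ) ≤ JE := by
      intro x
      calc ∫⁻ y in Metric.ball a (dist x a), f y ∂μ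
          ≤ ∫⁻ y, f y ∂μ := lintegral_mono' Measure.restrict_le_self le_rfl
        _ = JE := by rw [hfdef, lintegral_indicator hE, hJE]
    have hlow : JE ^ q * UF ≤
        ∫⁻ x, (∫⁻ y in Metric.ball a (dist x a), f y ∂μ) ^ q * u x ∂μ := by
      calc JE ^ q * UF = ∫⁻ x in F, JE ^ q * u x ∂μ := by
            rw [lintegral_const_mul _ hu, hUF]
        _ ≤ ∫⁻ x in F, (∫⁻ y in Metric.ball a (dist x a), f y ∂μ) ^ q * u x ∂μ :=
            lintegral_mono fun x =>
              mul_le_mul_left (ennreal_rpow_anti hq.le (hball x)) (u x)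
        _ ≤ ∫⁻ x, (∫⁻ y in Metric.ball a (dist x a), f y ∂μ) ^ q * u x ∂μ :=
            lintegral_mono' Measure.restrict_le_self le_rfl
    have hmain := hineq f hfm
    rw [hint] at hmain
    have h3 : C * JE ^ (1 / p) ≤ (JE ^ q * UF) ^ (1 / q) :=
      le_trans hmain (ennreal_rpow_anti h1q.le hlow)
    have hJEq0 : JE ^ q ≠ 0 := by
      intro h
      rcases ENNReal.rpow_eq_zero_iff.mp h with ⟨h1, _⟩ | ⟨h1, _⟩
      exacts [hJ0 h1, hJtop h1]
    have hJEqt : JE ^ q ≠ ∞ := by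
      intro h
      rcases ENNReal.rpow_eq_top_iff.mp h with ⟨h1, _⟩ | ⟨h1, _⟩
      exacts [hJ0 h1, hJtop h1]
    have hJp0 : JE ^ (1 / p) ≠ 0 := by
      intro h
      rcases ENNReal.rpow_eq_zero_iff.mp h with ⟨h1, _⟩ | ⟨h1, _⟩
      exacts [hJ0 h1, hJtop h1]
    have hJpt : JE ^ (1 / p) ≠ ∞ := by
      intro h
      rcases ENNReal.rpow_eq_top_iff.mp h with ⟨h1, _⟩ | ⟨h1, _⟩
      exacts [hJ0 h1, hJtop h1]
    rcases eq_or_ne UF ∞ with hUFt | hUFt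
    · exfalso
      rw [hUFt, ENNReal.mul_top hJEq0, ENNReal.top_rpow_of_neg h1q] at h3
      exact mul_ne_zero hC_pos.ne' hJp0 (le_antisymm h3 zero_le)
    · have heq : (JE ^ q * UF) ^ (1 / q) = JE * UF ^ (1 / q) := by
        rw [ENNReal.mul_rpow_of_ne_top hJEqt hUFt, ← ENNReal.rpow_mul,
          mul_one_div_cancel hqne, ENNReal.rpow_one]
      rw [heq] at h3
      refine (ENNReal.mul_le_mul_iff_left hJp0 hJpt).mp ?_
      calc C * JE ^ (1 / p) ≤ JE * UF ^ (1 / q) := h3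
        _ = UF ^ (1 / q) * JE ^ (1 / p') * JE ^ (1 / p) := by
            rw [mul_assoc, ← ENNReal.rpow_add _ _ hJ0 hJtop, hsum,
              ENNReal.rpow_one, mul_comm]
  -- The main pointwise bound.
  have main : ∀ x : X, x ≠ a →
      (∫⁻ y in (Metric.ball a (dist x a))ᶜ, u y ∂μ) ^ (1 / q) *
        (∫⁻ y in Metric.ball a (dist x a), (v y) ^ (1 - p') ∂μ) ^ (1 / p') ≥ C := by
    intro x _hx
    set B := Metric.ball a (dist x a) with hBdef
    have hBm : MeasurableSet B := measurableSet_ball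
    set J := ∫⁻ y in B, v y ^ (1 - p') ∂μ with hJ
    set U := ∫⁻ y in Bᶜ, u y ∂μ with hU
    by_cases hJ0 : J = 0
    · -- In this case `J ^ (1/p') = ∞`; it suffices that `U ^ (1/q) ≠ 0`, i.e. `U ≠ ∞`.
      have hUne : U ≠ ∞ := by
        intro hUt
        by_cases hμ : μ = 0
        · rw [hU, hμ] at hUt; simp at hUt
        · obtain ⟨n, hn⟩ :
              ∃ n : ℕ, μ (spanningSets μ n ∩ {y | v y ^ (1 - p') ≤ n}) ≠ 0 := by
            by_contra hall
            push_neg at hall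
            apply hμ
            have hcov : (⋃ n : ℕ, spanningSets μ n ∩ {y | v y ^ (1 - p') ≤ n}) = univ := by
              ext y
              simp only [mem_iUnion, mem_univ, iff_true, mem_inter_iff, mem_setOf_eq]
              obtain ⟨m, hm⟩ := ENNReal.exists_nat_gt (hvpt y)
              obtain ⟨k, hk⟩ := mem_iUnion.mp
                (by rw [iUnion_spanningSets]; exact mem_univ y :
                  y ∈ ⋃ i, spanningSets μ i)
              refine ⟨max k m, monotone_spanningSets μ (le_max_left _ _) hk, ?_⟩
              exact le_trans hm.le (by exact_mod_cast le_max_right k m)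
            have hle := measure_iUnion_le
              (μ := μ) (fun n : ℕ => spanningSets μ n ∩ {y | v y ^ (1 - p') ≤ n})
            rw [hcov] at hle
            simp only [hall, tsum_zero, nonpos_iff_eq_zero] at hle
            exact Measure.measure_univ_eq_zero.mp hle
          set E := spanningSets μ n ∩ {y | v y ^ (1 - p') ≤ n} with hEdef
          have hEm : MeasurableSet E :=
            (measurableSet_spanningSets μ n).inter (measurableSet_le hvm measurable_const)
          have hJE0 : (∫⁻ y in E, v y ^ (1 - p') ∂μ) ≠ 0 := by
            intro h0
            have hae := (lintegral_eq_zero_iff hvm).mp h0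
            have h1 : μ.restrict E {y | ¬ v y ^ (1 - p') = 0} = 0 := hae
            rw [show {y | ¬ v y ^ (1 - p') = 0} = univ from
              eq_univ_of_forall fun y => hvp0 y] at h1
            rw [Measure.restrict_apply_univ] at h1
            exact hn h1
          have hJEt : (∫⁻ y in E, v y ^ (1 - p') ∂μ) ≠ ∞ := by
            apply ne_of_lt
            calc ∫⁻ y in E, v y ^ (1 - p') ∂μ
                ≤ ∫⁻ _ in E, (n : ℝ≥0∞) ∂μ :=
                  setLIntegral_mono measurable_const fun y hy => hy.2
              _ = (n : ℝ≥0∞) * μ E := setLIntegral_const E n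
              _ ≤ (n : ℝ≥0∞) * μ (spanningSets μ n) := by
                  gcongr
                  exact inter_subset_left
              _ < ∞ := ENNReal.mul_lt_top (ENNReal.natCast_lt_top n)
                  (measure_spanningSets_lt_top μ n)
          have hk := key Bᶜ E hEm hJE0 hJEt
          rw [← hU, hUt, ENNReal.top_rpow_of_neg h1q, zero_mul] at hk
          exact hC_pos.ne' (le_zero_iff.mp hk)
      have hU0 : U ^ (1 / q) ≠ 0 := by
        intro h
        rcases ENNReal.rpow_eq_zero_iff.mp h with ⟨_, h2⟩ | ⟨h1, _⟩
        · exact h1q.asymm h2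
        · exact hUne h1
      rw [hJ0, ENNReal.zero_rpow_of_neg h1p', ENNReal.mul_top hU0]
      exact le_top
    · by_cases hJt : J = ∞
      · exfalso
        set Eseq : ℕ → Set X :=
          fun n => B ∩ spanningSets μ n ∩ {y | v y ^ (1 - p') ≤ n} with hEseq
        have hEseqm : ∀ n, MeasurableSet (Eseq n) := fun n =>
          (hBm.inter (measurableSet_spanningSets μ n)).inter
            (measurableSet_le hvm measurable_const)
        have hmono : Monotone Eseq := by
          intro m n hmn
          refine inter_subset_inter (inter_subset_inter_right _
            (monotone_spanningSets μ hmn)) ?_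
          intro y hy
          simp only [mem_setOf_eq] at hy ⊢
          exact hy.trans (Nat.cast_le.mpr hmn)
        have hunion : (⋃ n, Eseq n) = B := by
          ext y
          simp only [hEseq, mem_iUnion, mem_inter_iff, mem_setOf_eq]
          constructor
          · rintro ⟨n, ⟨hyB, _⟩, _⟩; exact hyB
          · intro hyB
            obtain ⟨m, hm⟩ := ENNReal.exists_nat_gt (hvpt y)
            obtain ⟨k, hk⟩ := mem_iUnion.mp
              (by rw [iUnion_spanningSets]; exact mem_univ y :
                y ∈ ⋃ i, spanningSets μ i)
            refine ⟨max k m, ⟨hyB, monotone_spanningSets μ (le_max_left _ _) hk⟩, ?_⟩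
            exact le_trans hm.le (by exact_mod_cast le_max_right k m)
        set ν := μ.withDensity (fun y => v y ^ (1 - p')) with hν
        have hνs : ∀ s : Set X, MeasurableSet s →
            ν s = ∫⁻ y in s, v y ^ (1 - p') ∂μ := fun s hs => withDensity_apply _ hs
        have hsup : (⨆ n, ν (Eseq n)) = ν B := by
          rw [← hunion]
          exact (Directed.measure_iUnion (hmono.directed_le)).symm
        have hνB : ν B = ∞ := by rw [hνs B hBm, ← hJ]; exact hJt
        have htop : Tendsto (fun n => ν (Eseq n)) atTop (𝓝 ⊤) := by
          have h := tendsto_atTop_iSup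
            (f := fun n => ν (Eseq n)) (fun m n hmn => measure_mono (hmono hmn))
          rwa [hsup, hνB] at h
        have hνfin : ∀ n, ν (Eseq n) ≠ ∞ := by
          intro n
          rw [hνs _ (hEseqm n)]
          apply ne_of_lt
          calc ∫⁻ y in Eseq n, v y ^ (1 - p') ∂μ
              ≤ ∫⁻ _ in Eseq n, (n : ℝ≥0∞) ∂μ :=
                setLIntegral_mono measurable_const fun y hy => hy.2
            _ = (n : ℝ≥0∞) * μ (Eseq n) := setLIntegral_const _ n
            _ ≤ (n : ℝ≥0∞) * μ (spanningSets μ n) := by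
                gcongr
                exact fun y hy => hy.1.2
            _ < ∞ := ENNReal.mul_lt_top (ENNReal.natCast_lt_top n)
                (measure_spanningSets_lt_top μ n)
        have hμB : μ B ≠ 0 := by
          intro h
          exact hJ0 (by rw [hJ, Measure.restrict_eq_zero.mpr h, lintegral_zero_measure])
        have hW0 : (∫⁻ y in (univ : Set X), u y ∂μ) ≠ 0 := by
          intro h0
          have hae := (lintegral_eq_zero_iff hu).mp
            (by rwa [Measure.restrict_univ] at h0)
          have h1 : μ {y | ¬ u y = 0} = 0 := hae
          rw [show {y | ¬ u y = 0} = univ from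
            eq_univ_of_forall fun y => (hu_pos y).ne'] at h1
          exact hμB (le_antisymm (h1 ▸ measure_mono (subset_univ B)) zero_le)
        have hWt : (∫⁻ y in (univ : Set X), u y ∂μ) ^ (1 / q) ≠ ∞ := by
          intro h
          rcases ENNReal.rpow_eq_top_iff.mp h with ⟨h1, _⟩ | ⟨_, h2⟩
          · exact hW0 h1
          · exact h1q.asymm h2
        obtain ⟨N, hN⟩ : ∃ N, ν (Eseq N) ≠ 0 := by
          by_contra hall
          push_neg at hall
          have h0 : (⨆ n, ν (Eseq n)) = 0 := by simp [hall]
          rw [hsup, hνB] at h0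
          exact top_ne_zero h0
        have hkn : ∀ n, N ≤ n →
            C ≤ (∫⁻ y in (univ : Set X), u y ∂μ) ^ (1 / q) * (ν (Eseq n)) ^ (1 / p') := by
          intro n hn
          have h0 : ν (Eseq n) ≠ 0 := fun h =>
            hN (le_antisymm (h ▸ measure_mono (hmono hn)) zero_le)
          have hk := key univ (Eseq n) (hEseqm n)
            (by rw [← hνs _ (hEseqm n)]; exact h0)
            (by rw [← hνs _ (hEseqm n)]; exact hνfin n)
          rwa [← hνs _ (hEseqm n)] at hk
        have hlim : Tendsto
            (fun n => (∫⁻ y in (univ : Set X), u y ∂μ) ^ (1 / q) * (ν (Eseq n)) ^ (1 / p'))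
            atTop (𝓝 0) := by
          have h1 : Tendsto (fun n => (ν (Eseq n)) ^ (1 / p')) atTop
              (𝓝 ((⊤ : ℝ≥0∞) ^ (1 / p'))) :=
            (ENNReal.continuous_rpow_const.tendsto ⊤).comp htop
          rw [ENNReal.top_rpow_of_neg h1p'] at h1
          have h2 := ENNReal.Tendsto.const_mul h1 (Or.inr hWt)
          simpa using h2
        have hfin : C ≤ 0 := ge_of_tendsto hlim (eventually_atTop.mpr ⟨N, hkn⟩)
        exact hC_pos.ne' (le_zero_iff.mp hfin)
      · exact key Bᶜ B hBm hJ0 hJt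
  exact ⟨main, le_iInf fun x => le_iInf fun hx => main x hx⟩
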